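/- Define sgn : ℤ → ℤ by sgn(m) = 1 if m ≥ 0 and sgn(m) = -1 if m < 0. For every complex s with Re(s) > 2, the double series ∑_{n∈ℤ} ∑_{ℓ=1}^∞ sgn(n)·(|n|+ℓ)^{-s} converges absolutely and equals ζ(s), the Riemann zeta function at s. -/
import Mathlib


/-- The sign function on `ℤ` with the convention `sgn(0) = 1`. -/
def sgn (m : ℤ) : ℤ := if 0 ≤ m then 1 else -1

/-- For `Re(s) > 2`, the double series
`∑_{n∈ℤ} ∑_{ℓ=1}^∞ sgn(n)·(|n|+ℓ)^{-s}` converges absolutely and equals `ζ(s)`.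
(The index `ℓ = p.2 + 1` runs over `1, 2, 3, …`.) -/
theorem stmt_9 (s : ℂ) (hs : 2 < s.re) :
    Summable (fun p : ℤ × ℕ =>
      ‖(sgn p.1 : ℂ) * ((p.1.natAbs : ℂ) + (p.2 : ℂ) + 1) ^ (-s)‖) ∧
    HasSum (fun p : ℤ × ℕ => (sgn p.1 : ℂ) * ((p.1.natAbs : ℂ) + (p.2 : ℂ) + 1) ^ (-s))
      (riemannZeta s) := by
  set σ := s.re with hσ
  have hσ0 : (0:ℝ) < σ := by linarith
  set F : ℤ × ℕ → ℂ :=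
    fun p => (sgn p.1 : ℂ) * ((p.1.natAbs : ℂ) + (p.2 : ℂ) + 1) ^ (-s) with hF
  -- norm identity
  have hnorm : ∀ p : ℤ × ℕ,
      ‖F p‖ = ((p.1.natAbs + p.2 + 1 : ℕ) : ℝ) ^ (-σ) := by
    intro p
    have h1 : ‖(sgn p.1 : ℂ)‖ = 1 := by
      unfold sgn; split <;> simp
    have h2 : ((p.1.natAbs : ℂ) + (p.2 : ℂ) + 1) = ((p.1.natAbs + p.2 + 1 : ℕ) : ℂ) := by
      push_cast; ring
    rw [hF, norm_mul, h1, one_mul, h2,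
      Complex.norm_natCast_cpow_of_pos (by omega) (-s)]
    simp [hσ]
  -- auxiliary real summability
  have hNat : Summable (fun n : ℕ => ((n:ℝ) + 1) ^ (-(σ/2))) := by
    have h0 : Summable (fun n : ℕ => (n:ℝ) ^ (-(σ/2))) :=
      Real.summable_nat_rpow.mpr (by linarith)
    have h := (summable_nat_add_iff 1).mpr h0
    simpa using h
  have hInt : Summable (fun n : ℤ => ((n.natAbs : ℝ) + 1) ^ (-(σ/2))) := by
    apply Summable.of_nat_of_neg
    · simpa using hNat
    · simpa using hNat
  have hG : Summable (fun p : ℤ × ℕ =>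
      ((p.1.natAbs : ℝ) + 1) ^ (-(σ/2)) * ((p.2 : ℝ) + 1) ^ (-(σ/2))) :=
    hInt.mul_of_nonneg hNat (fun n => Real.rpow_nonneg (by positivity) _)
      (fun n => Real.rpow_nonneg (by positivity) _)
  have key : Summable (fun p : ℤ × ℕ => ((p.1.natAbs + p.2 + 1 : ℕ) : ℝ) ^ (-σ)) := by
    refine hG.of_nonneg_of_le (fun p => Real.rpow_nonneg (by positivity) _) (fun p => ?_)
    set a := (p.1.natAbs : ℝ) with ha'
    set b := (p.2 : ℝ) with hb'
    have ha : (0:ℝ) ≤ a := Nat.cast_nonneg _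
    have hb : (0:ℝ) ≤ b := Nat.cast_nonneg _
    have hcast : ((p.1.natAbs + p.2 + 1 : ℕ) : ℝ) = a + b + 1 := by
      rw [ha', hb']; push_cast; ring
    rw [hcast]
    have h1 : (a+1) ^ (-(σ/2)) * (b+1) ^ (-(σ/2)) = ((a+1)*(b+1)) ^ (-(σ/2)) :=
      (Real.mul_rpow (by linarith) (by linarith)).symm
    have h2 : (a+b+1) ^ (-σ) = ((a+b+1) ^ (2:ℝ)) ^ (-(σ/2)) := by
      rw [← Real.rpow_mul (by linarith)]; ring_nf
    have h3 : (a+b+1) ^ (2:ℝ) = (a+b+1) * (a+b+1) := by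
      rw [show (2:ℝ) = ((2:ℕ):ℝ) by norm_num, Real.rpow_natCast]; ring
    rw [h1, h2]
    apply Real.rpow_le_rpow_of_nonpos (by positivity) ?_ (by linarith)
    rw [h3]; nlinarith
  have hS : Summable fun p : ℤ × ℕ => ‖F p‖ := by
    exact (summable_congr hnorm).mpr key
  refine ⟨hS, ?_⟩
  have hf : Summable F := hS.of_norm
  set g : ℤ → ℂ := fun n => ∑' ℓ : ℕ, F (n, ℓ) with hg
  have hgsum : HasSum g (∑' p, F p) :=
    hf.hasSum.prod_fiberwise (fun n => (hf.prod_factor n).hasSum)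
  -- oddness
  have hodd : ∀ n : ℕ, g (-((n:ℤ)+1)) = - g ((n:ℤ)+1) := by
    intro n
    have hsgn1 : sgn ((n:ℤ)+1) = 1 := if_pos (by omega)
    have hsgn2 : sgn (-((n:ℤ)+1)) = -1 := if_neg (by omega)
    have habs : (-((n:ℤ)+1)).natAbs = ((n:ℤ)+1).natAbs := by omega
    rw [hg]
    simp only [hF, hsgn1, hsgn2, habs]
    rw [← tsum_neg]
    congr 1; funext ℓ; push_cast; ring
  have hA : Summable (fun n : ℕ => g ((n:ℤ)+1)) :=
    hgsum.summable.comp_injective (fun a b h => by omega)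
  have h1 : HasSum (fun n : ℕ => g ((n:ℤ)+1)) (∑' n : ℕ, g ((n:ℤ)+1)) := hA.hasSum
  have h2 : HasSum (fun n : ℕ => g (-((n:ℤ)+1))) (-(∑' n : ℕ, g ((n:ℤ)+1))) := by
    simp only [hodd]; exact h1.neg
  have hgz : HasSum g ((∑' n : ℕ, g ((n:ℤ)+1)) + g 0 + -(∑' n : ℕ, g ((n:ℤ)+1))) :=
    h1.of_add_one_of_neg_add_one h2
  have hT : (∑' p, F p) = g 0 := by
    have := hgsum.unique hgz
    rw [this]; ring
  have hg0 : g 0 = riemannZeta s := by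
    have hsgn0 : sgn 0 = 1 := if_pos le_rfl
    rw [zeta_eq_tsum_one_div_nat_add_one_cpow (by linarith), hg]
    simp only [hF, hsgn0, Int.natAbs_zero, Nat.cast_zero, Int.cast_one, one_mul,
      Complex.ofReal_zero, zero_add]
    congr 1; funext n
    rw [Complex.cpow_neg, one_div]
  have := hf.hasSum
  rwa [hT, hg0] at this
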